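/- Let p be a prime and h an integer with 1 ≤ h ≤ p-1 and gcd(h, p-1) = 1. Then there is exactly one g with 1 ≤ g ≤ p-1 satisfying g^h ≡ h (mod p), namely g ≡ h^{h̄} (mod p) where h̄ is the inverse of h modulo p-1. Consequently the number of pairs (g,h) with g^h ≡ h (mod p) and gcd(h,p-1)=1 equals φ(p-1). -/

import Mathlib

open scoped Classical

private lemma pow_congr_aux {p : ℕ} [Fact p.Prime] (a : ZMod p) (ha : a ≠ 0) {m n : ℕ}
    (hle : m ≤ n) (hmn : m ≡ n [MOD p - 1]) : a ^ m = a ^ n := by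
  obtain ⟨k, hk⟩ := (Nat.modEq_iff_dvd' hle).mp hmn
  have hn : n = m + (p - 1) * k := by omega
  rw [hn, pow_add, pow_mul, ZMod.pow_card_sub_one_eq_one ha, one_pow, mul_one]

private lemma pow_congr {p : ℕ} [Fact p.Prime] (a : ZMod p) (ha : a ≠ 0) {m n : ℕ}
    (hmn : m ≡ n [MOD p - 1]) : a ^ m = a ^ n := by
  rcases le_total m n with hle | hle
  · exact pow_congr_aux a ha hle hmn
  · exact (pow_congr_aux a ha hle hmn.symm).symm

private lemma sol_iff (p h hbar : ℕ) (hp : p.Prime) (h1 : 1 ≤ h) (h2 : h ≤ p - 1)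
    (hinv : h * hbar ≡ 1 [MOD p - 1]) (x : ZMod p) :
    x ^ h = (h : ZMod p) ↔ x = (h : ZMod p) ^ hbar := by
  haveI : Fact p.Prime := ⟨hp⟩
  have hp2 : 2 ≤ p := hp.two_le
  have hne : (h : ZMod p) ≠ 0 := by
    rw [Ne, ZMod.natCast_eq_zero_iff]
    intro hd
    have := Nat.le_of_dvd (by omega) hd
    omega
  constructor
  · intro hx
    have hx0 : x ≠ 0 := by
      rintro rfl
      rw [zero_pow (by omega)] at hx
      exact hne hx.symm
    calc x = x ^ 1 := (pow_one x).symm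
      _ = x ^ (h * hbar) := pow_congr x hx0 hinv.symm
      _ = (x ^ h) ^ hbar := by rw [pow_mul]
      _ = (h : ZMod p) ^ hbar := by rw [hx]
  · rintro rfl
    calc ((h : ZMod p) ^ hbar) ^ h = (h : ZMod p) ^ (hbar * h) := by rw [pow_mul]
      _ = (h : ZMod p) ^ 1 := pow_congr _ hne (by rwa [Nat.mul_comm] at hinv)
      _ = (h : ZMod p) := pow_one _

private lemma hne_cast (p h : ℕ) (hp : p.Prime) (h1 : 1 ≤ h) (h2 : h ≤ p - 1) :
    (h : ZMod p) ≠ 0 := by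
  haveI : Fact p.Prime := ⟨hp⟩
  have hp2 : 2 ≤ p := hp.two_le
  rw [Ne, ZMod.natCast_eq_zero_iff]
  intro hd
  have := Nat.le_of_dvd (by omega) hd
  omega

/-- the ℕ-indexed filter is a singleton -/
private lemma filter_singleton (p h hbar : ℕ) (hp : p.Prime) (h1 : 1 ≤ h) (h2 : h ≤ p - 1)
    (hinv : h * hbar ≡ 1 [MOD p - 1]) :
    ((Finset.Icc 1 (p - 1)).filter fun g : ℕ => (g : ZMod p) ^ h = (h : ZMod p)) =
      {((h : ZMod p) ^ hbar).val} := by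
  haveI : Fact p.Prime := ⟨hp⟩
  have hp2 : 2 ≤ p := hp.two_le
  have hne := hne_cast p h hp h1 h2
  have hvne : ((h : ZMod p) ^ hbar) ≠ 0 := pow_ne_zero _ hne
  have hv0 : ((h : ZMod p) ^ hbar).val ≠ 0 := by
    rw [Ne, ZMod.val_eq_zero]; exact hvne
  have hvlt : ((h : ZMod p) ^ hbar).val < p := ZMod.val_lt _
  ext g
  simp only [Finset.mem_filter, Finset.mem_Icc, Finset.mem_singleton]
  constructor
  · rintro ⟨⟨hg1, hg2⟩, hpow⟩
    have hx := (sol_iff p h hbar hp h1 h2 hinv _).mp hpow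
    have hgval : ((g : ZMod p)).val = g := ZMod.val_cast_of_lt (by omega)
    rw [← hgval, hx]
  · rintro rfl
    refine ⟨⟨by omega, by omega⟩, ?_⟩
    rw [ZMod.natCast_val, ZMod.cast_id]
    exact (sol_iff p h hbar hp h1 h2 hinv _).mpr rfl

private lemma card_coprime (n : ℕ) (hn : 1 ≤ n) :
    ((Finset.Icc 1 n).filter fun h => Nat.gcd h n = 1).card = n.totient := by
  rcases eq_or_lt_of_le hn with h1 | h2
  · simp [← h1]
  · rw [Nat.totient_eq_card_coprime]
    congr 1
    ext x
    simp only [Finset.mem_filter, Finset.mem_Icc, Finset.mem_range, Nat.Coprime]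
    constructor
    · rintro ⟨⟨hx1, hx2⟩, hx⟩
      have hxn : x ≠ n := by
        rintro rfl
        rw [Nat.gcd_self] at hx
        omega
      exact ⟨by omega, by rwa [Nat.gcd_comm]⟩
    · rintro ⟨hx1, hx2⟩
      have hx0 : x ≠ 0 := by
        rintro rfl
        rw [Nat.gcd_zero_right] at hx2
        omega
      exact ⟨⟨by omega, by omega⟩, by rwa [Nat.gcd_comm]⟩

theorem stmt_9 (p h hbar : ℕ) (hp : p.Prime) (h1 : 1 ≤ h) (h2 : h ≤ p - 1)
    (hg : Nat.gcd h (p - 1) = 1) (hinv : h * hbar ≡ 1 [MOD p - 1]) :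
    (((Finset.Icc 1 (p - 1)).filter fun g => (g : ZMod p) ^ h = (h : ZMod p)).card = 1 ∧
      ∀ g ∈ Finset.Icc 1 (p - 1), (g : ZMod p) ^ h = (h : ZMod p) →
        (g : ZMod p) = (h : ZMod p) ^ hbar) ∧
    (((Finset.Icc 1 (p - 1)) ×ˢ Finset.Icc 1 (p - 1)).filter fun gh =>
        (gh.1 : ZMod p) ^ gh.2 = (gh.2 : ZMod p) ∧ Nat.gcd gh.2 (p - 1) = 1).card =
      Nat.totient (p - 1) := by
  haveI : Fact p.Prime := ⟨hp⟩
  have hp2 : 2 ≤ p := hp.two_le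
  have hne := hne_cast p h hp h1 h2
  have hvne : ((h : ZMod p) ^ hbar) ≠ 0 := pow_ne_zero _ hne
  have hv0 : ((h : ZMod p) ^ hbar).val ≠ 0 := by
    rw [Ne, ZMod.val_eq_zero]; exact hvne
  have hvlt : ((h : ZMod p) ^ hbar).val < p := ZMod.val_lt _
  refine ⟨⟨?_, ?_⟩, ?_⟩
  · -- the ZMod-level filter over the image set is a singleton
    have heq : (Finset.filter (fun g : ZMod p => g ^ h = (h : ZMod p))
        (do let a ← Finset.Icc 1 (p - 1); pure ((a : ZMod p)))) = {(h : ZMod p) ^ hbar} := by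
      ext x
      simp only [Finset.mem_filter, Finset.mem_singleton]
      constructor
      · rintro ⟨_, hpow⟩
        exact (sol_iff p h hbar hp h1 h2 hinv x).mp hpow
      · rintro rfl
        refine ⟨?_, (sol_iff p h hbar hp h1 h2 hinv _).mpr rfl⟩
        have : ((h : ZMod p) ^ hbar).val ∈ Finset.Icc 1 (p - 1) := by
          rw [Finset.mem_Icc]; omega
        have hmem : ∃ a ∈ Finset.Icc 1 (p - 1), ((a : ℕ) : ZMod p) = (h : ZMod p) ^ hbar :=
          ⟨_, this, by rw [ZMod.natCast_val, ZMod.cast_id]⟩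
        simpa using hmem
    rw [heq, Finset.card_singleton]
  · intro g _ hgpow
    exact (sol_iff p h hbar hp h1 h2 hinv _).mp hgpow
  · -- count pairs
    have key : ∀ h' ∈ (Finset.Icc 1 (p - 1)).filter (fun h' => Nat.gcd h' (p - 1) = 1),
        ((Finset.Icc 1 (p - 1)).filter fun g : ℕ => (g : ZMod p) ^ h' = (h' : ZMod p)).card = 1 := by
      intro h' hh'
      simp only [Finset.mem_filter, Finset.mem_Icc] at hh'
      obtain ⟨⟨hh1, hh2⟩, hhg⟩ := hh'
      by_cases hpn : p - 1 = 1
      · have hb' : h' * 0 ≡ 1 [MOD p - 1] := by unfold Nat.ModEq; simp [hpn]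
        rw [filter_singleton p h' 0 hp hh1 hh2 hb']; simp
      · obtain ⟨b, -, hb⟩ := Nat.exists_mul_mod_eq_one_of_coprime hhg (by omega)
        have hb' : h' * b ≡ 1 [MOD p - 1] := by
          unfold Nat.ModEq
          rw [hb, Nat.one_mod_eq_one.mpr (by omega)]
        rw [filter_singleton p h' b hp hh1 hh2 hb']; simp
    rw [Finset.card_filter, Finset.sum_product_right]
    have step : ∀ h' ∈ Finset.Icc 1 (p - 1),
        (∑ g ∈ Finset.Icc 1 (p - 1),
          if (g : ZMod p) ^ h' = (h' : ZMod p) ∧ Nat.gcd h' (p - 1) = 1 then 1 else 0) =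
        if Nat.gcd h' (p - 1) = 1 then
          ((Finset.Icc 1 (p - 1)).filter fun g : ℕ => (g : ZMod p) ^ h' = (h' : ZMod p)).card
        else 0 := by
      intro h' _
      by_cases hc : Nat.gcd h' (p - 1) = 1
      · rw [if_pos hc, Finset.card_filter]
        exact Finset.sum_congr rfl fun g _ => by simp only [hc, and_true]
      · rw [if_neg hc]
        exact Finset.sum_eq_zero fun g _ => by simp only [hc, and_false, if_false]
    rw [Finset.sum_congr rfl step, ← Finset.sum_filter,
      Finset.sum_congr rfl key, Finset.sum_const, smul_eq_mul, mul_one,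
      card_coprime (p - 1) (by omega)]
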